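/- Let E₁, E₂ be independent standard exponential random variables and let ξ < 1. Define Z₁ = H_ξ(E₁) and Z₂ = H_ξ(E₁ + E₂), where H_ξ(x) = (x^{-ξ} - 1)/ξ for ξ ≠ 0 and H_ξ(x) = -log x for ξ = 0. Then E[Z₁ - Z₂] = Γ(1 - ξ), where Γ is the Gamma function. -/

import Mathlib

open MeasureTheory ProbabilityTheory Filter Set

/-- `H_ξ(x) = (x^{-ξ} - 1)/ξ` for `ξ ≠ 0` and `H_0(x) = -log x`. -/
noncomputable def Hxi (ξ x : ℝ) : ℝ := if ξ = 0 then -Real.log x else (x ^ (-ξ) - 1) / ξ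

lemma gammaPDF11 (x : ℝ) :
    gammaPDF 1 1 x = ENNReal.ofReal (if 0 ≤ x then Real.exp (-x) else 0) := by
  rw [gammaPDF_eq]
  congr 1
  split_ifs with h
  · simp [Real.Gamma_one, Real.rpow_zero, Real.rpow_natCast]
  · rfl

lemma expMeasure_Ici {a : ℝ} (ha : 0 ≤ a) :
    expMeasure 1 (Ici a) = ENNReal.ofReal (Real.exp (-a)) := by
  rw [expMeasure, gammaMeasure, withDensity_apply _ measurableSet_Ici]
  have h1 : ∀ x ∈ Ici a, gammaPDF 1 1 x = ENNReal.ofReal (Real.exp (-x)) := by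
    intro x hx
    rw [gammaPDF11, if_pos (le_trans ha hx)]
  rw [setLIntegral_congr_fun measurableSet_Ici h1]
  have hint : IntegrableOn (fun x ↦ Real.exp (-x)) (Ici a) := by
    rw [integrableOn_Ici_iff_integrableOn_Ioi]
    simpa using exp_neg_integrableOn_Ioi a one_pos
  rw [← ofReal_integral_eq_lintegral_ofReal hint
      ((ae_restrict_iff' measurableSet_Ici).2 (ae_of_all _ fun x _ ↦ (Real.exp_pos _).le))]
  rw [integral_Ici_eq_integral_Ioi, integral_exp_neg_Ioi]

lemma expMeasure_Iic_zero : expMeasure 1 (Iic 0) = 0 := by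
  have h1 : expMeasure 1 (Iio 0) = 0 := by
    rw [expMeasure, gammaMeasure, withDensity_apply _ measurableSet_Iio]
    exact lintegral_gammaPDF_of_nonpos le_rfl
  have h2 : expMeasure 1 {(0:ℝ)} = 0 := by
    rw [expMeasure, gammaMeasure]
    exact withDensity_absolutelyContinuous _ _ (measure_singleton 0)
  have : Iic (0:ℝ) = Iio 0 ∪ {0} := by ext x; simp [le_iff_lt_or_eq]
  rw [this]
  exact le_antisymm (le_trans (measure_union_le _ _) (by rw [h1, h2]; simp)) zero_le

lemma prob_between {Ω : Type*} [MeasurableSpace Ω]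
    (P : Measure Ω) [IsProbabilityMeasure P]
    (E1 E2 : Ω → ℝ) (hm1 : Measurable E1) (hm2 : Measurable E2)
    (hindep : IndepFun E1 E2 P)
    (h1 : P.map E1 = expMeasure 1) (h2 : P.map E2 = expMeasure 1)
    {t : ℝ} (ht : 0 < t) :
    P {ω | E1 ω < t ∧ t ≤ E1 ω + E2 ω} = ENNReal.ofReal (t * Real.exp (-t)) := by
  haveI : IsProbabilityMeasure (expMeasure 1) := isProbabilityMeasure_expMeasure one_pos
  set S : Set (ℝ × ℝ) := {p | p.1 < t ∧ t ≤ p.1 + p.2} with hS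
  have hSm : MeasurableSet S :=
    (measurableSet_lt measurable_fst measurable_const).inter
      (measurableSet_le measurable_const (measurable_fst.add measurable_snd))
  have hmap : P.map (fun ω ↦ (E1 ω, E2 ω)) = (expMeasure 1).prod (expMeasure 1) := by
    rw [(indepFun_iff_map_prod_eq_prod_map_map hm1.aemeasurable hm2.aemeasurable).mp hindep,
      h1, h2]
  have hev : {ω | E1 ω < t ∧ t ≤ E1 ω + E2 ω} = (fun ω ↦ (E1 ω, E2 ω)) ⁻¹' S := rfl
  rw [hev, ← Measure.map_apply (hm1.prodMk hm2) hSm, hmap,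
    Measure.prod_apply hSm]
  have hslice : ∀ x : ℝ, expMeasure 1 (Prod.mk x ⁻¹' S)
      = (Iio t).indicator (fun x ↦ ENNReal.ofReal (Real.exp (-(t - x)))) x := by
    intro x
    by_cases hx : x < t
    · have : Prod.mk x ⁻¹' S = Ici (t - x) := by
        ext y; simp only [hS, mem_preimage, mem_setOf_eq, mem_Ici]
        constructor
        · rintro ⟨-, h⟩; linarith
        · intro h; exact ⟨hx, by linarith⟩
      rw [this, expMeasure_Ici (by linarith), indicator_of_mem (mem_Iio.2 hx)]
    · have : Prod.mk x ⁻¹' S = ∅ := by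
        ext y; simp only [hS, mem_preimage, mem_setOf_eq, mem_empty_iff_false, iff_false,
          not_and]
        intro h; exact absurd h hx
      rw [this, measure_empty, indicator_of_notMem (fun h ↦ hx (mem_Iio.1 h))]
  simp_rw [hslice]
  have hgm : Measurable (gammaPDF 1 1) := (measurable_gammaPDFReal 1 1).ennreal_ofReal
  have hg2 : Measurable ((Iio t).indicator
      fun x : ℝ ↦ ENNReal.ofReal (Real.exp (-(t - x)))) :=
    ((Real.measurable_exp.comp (measurable_const.sub measurable_id).neg).ennreal_ofReal).indicator
      measurableSet_Iio
  rw [expMeasure, gammaMeasure, lintegral_withDensity_eq_lintegral_mul _ hgm hg2]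
  have hptw : ∀ x : ℝ, (gammaPDF 1 1 *
      (Iio t).indicator (fun x ↦ ENNReal.ofReal (Real.exp (-(t - x))))) x
      = (Ico 0 t).indicator (fun _ ↦ ENNReal.ofReal (Real.exp (-t))) x := by
    intro x
    simp only [Pi.mul_apply, gammaPDF11, indicator_apply, mem_Iio, mem_Ico]
    by_cases hx0 : 0 ≤ x <;> by_cases hxt : x < t <;>
      simp [hx0, hxt, ← ENNReal.ofReal_mul (Real.exp_pos _).le, ← Real.exp_add]
    ring_nf
  simp_rw [hptw]
  rw [lintegral_indicator measurableSet_Ico, setLIntegral_const, Real.volume_Ico,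
    ← ENNReal.ofReal_mul (Real.exp_pos _).le]
  rw [sub_zero, mul_comm]

lemma hxi_hasDerivAt (ξ : ℝ) {t : ℝ} (ht : 0 < t) :
    HasDerivAt (fun u ↦ -(Hxi ξ u)) (t ^ (-ξ - 1)) t := by
  by_cases hξ : ξ = 0
  · subst hξ
    have : (fun u ↦ -(Hxi 0 u)) = Real.log := by
      funext u; simp [Hxi]
    rw [this]
    have h := Real.hasDerivAt_log ht.ne'
    convert h using 1
    rw [neg_zero, zero_sub, Real.rpow_neg_one]
  · have h0 : (fun u ↦ -(Hxi ξ u)) = fun u ↦ -((u ^ (-ξ) - 1) / ξ) := by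
      funext u; simp [Hxi, hξ]
    rw [h0]
    have h := (Real.hasDerivAt_rpow_const (p := -ξ) (Or.inl ht.ne')).sub_const 1
    have h2 := (h.div_const ξ).neg
    have he : -(-ξ * t ^ (-ξ - 1) / ξ) = t ^ (-ξ - 1) := by
      rw [neg_mul, neg_div, neg_neg, mul_div_cancel_left₀ _ hξ]
    rw [he] at h2
    exact h2

lemma hxi_intble (ξ : ℝ) {x y : ℝ} (hx : 0 < x) (hy : 0 ≤ y) :
    IntegrableOn (fun t : ℝ ↦ t ^ (-ξ - 1)) (Ioc x (x + y)) := by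
  have hc : ContinuousOn (fun t : ℝ ↦ t ^ (-ξ - 1)) (Icc x (x + y)) := by
    intro t htt
    exact (Real.continuousAt_rpow_const t _ (Or.inl (by linarith [htt.1]))).continuousWithinAt
  exact (hc.integrableOn_Icc).mono_set Ioc_subset_Icc_self

lemma hxi_sub (ξ : ℝ) {x y : ℝ} (hx : 0 < x) (hy : 0 < y) :
    Hxi ξ x - Hxi ξ (x + y)
      = ∫ t in Ioi 0, (Ioc x (x + y)).indicator (fun t ↦ t ^ (-ξ - 1)) t := by
  have hsub : Ioc x (x + y) ⊆ Ioi (0:ℝ) := fun t htt ↦ lt_trans hx htt.1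
  rw [setIntegral_indicator measurableSet_Ioc, inter_eq_right.2 hsub]
  have hle : x ≤ x + y := by linarith
  rw [← intervalIntegral.integral_of_le hle]
  rw [intervalIntegral.integral_eq_sub_of_hasDerivAt
      (f := fun u ↦ -(Hxi ξ u))
      (fun t htt ↦ by
        rw [uIcc_of_le hle] at htt
        exact hxi_hasDerivAt ξ (lt_of_lt_of_le hx htt.1))
      (by
        rw [intervalIntegrable_iff_integrableOn_Ioc_of_le hle]
        exact hxi_intble ξ hx hy.le)]
  ring

/-- If `E₁, E₂` are independent standard exponential random variables, `ξ < 1`,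
`Z₁ = H_ξ(E₁)` and `Z₂ = H_ξ(E₁ + E₂)`, then `E[Z₁ - Z₂] = Γ(1 - ξ)`. -/
theorem expectation_Z1_sub_Z2 {Ω : Type*} [MeasurableSpace Ω]
    (P : Measure Ω) [IsProbabilityMeasure P]
    (E1 E2 : Ω → ℝ) (hm1 : Measurable E1) (hm2 : Measurable E2)
    (hindep : IndepFun E1 E2 P)
    (h1 : P.map E1 = expMeasure 1) (h2 : P.map E2 = expMeasure 1)
    (ξ : ℝ) (hξ : ξ < 1) :
    ∫ ω, (Hxi ξ (E1 ω) - Hxi ξ (E1 ω + E2 ω)) ∂P = Real.Gamma (1 - ξ) := by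
  haveI : IsProbabilityMeasure (expMeasure 1) := isProbabilityMeasure_expMeasure one_pos
  have h1ξ : 0 < 1 - ξ := by linarith
  set f : ℝ → ℝ := fun t ↦ t ^ (-ξ - 1) with hfdef
  -- a.e. positivity of E1, E2
  have hposgen : ∀ (E : Ω → ℝ), Measurable E → P.map E = expMeasure 1 → ∀ᵐ ω ∂P, 0 < E ω := by
    intro E hmE hE
    have hz : P (E ⁻¹' (Iic 0)) = 0 := by
      rw [← Measure.map_apply hmE measurableSet_Iic, hE, expMeasure_Iic_zero]
    rw [ae_iff]
    convert hz using 2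
    ext ω; simp [not_lt]
  have hpos : ∀ᵐ ω ∂P, 0 < E1 ω ∧ 0 < E2 ω :=
    (hposgen E1 hm1 h1).and (hposgen E2 hm2 h2)
  set g : Ω → ℝ := fun ω ↦ ∫ t in Ioi 0, (Ioc (E1 ω) (E1 ω + E2 ω)).indicator f t with hgdef
  have hcong : ∫ ω, (Hxi ξ (E1 ω) - Hxi ξ (E1 ω + E2 ω)) ∂P = ∫ ω, g ω ∂P :=
    integral_congr_ae (hpos.mono fun ω h ↦ hxi_sub ξ h.1 h.2)
  set S : Set (Ω × ℝ) := {p | E1 p.1 < p.2 ∧ p.2 ≤ E1 p.1 + E2 p.1} with hSdef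
  have hSm : MeasurableSet S :=
    (measurableSet_lt (hm1.comp measurable_fst) measurable_snd).inter
      (measurableSet_le measurable_snd ((hm1.comp measurable_fst).add (hm2.comp measurable_fst)))
  have hf2 : Measurable (fun q : Ω × ℝ ↦ f q.2) := by
    rw [hfdef]; fun_prop
  have hFm : Measurable (S.indicator (fun q : Ω × ℝ ↦ f q.2)) := hf2.indicator hSm
  have hind_eq : ∀ ω t, (Ioc (E1 ω) (E1 ω + E2 ω)).indicator f t
      = S.indicator (fun q : Ω × ℝ ↦ f q.2) (ω, t) := by
    intro ω t
    simp only [indicator_apply, mem_Ioc, hSdef, mem_setOf_eq]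
  have hgm : AEStronglyMeasurable g P := by
    have h := hFm.stronglyMeasurable.integral_prod_right'
      (ν := volume.restrict (Ioi 0))
    have : g = fun ω ↦ ∫ t, S.indicator (fun q : Ω × ℝ ↦ f q.2) (ω, t)
        ∂(volume.restrict (Ioi 0)) := by
      funext ω; rw [hgdef]; simp_rw [hind_eq]
    rw [this]
    exact h.aestronglyMeasurable
  have hnn : 0 ≤ᵐ[P] g :=
    ae_of_all _ fun ω ↦ setIntegral_nonneg measurableSet_Ioi fun t ht ↦
      indicator_apply_nonneg fun _ ↦ Real.rpow_nonneg (le_of_lt ht) _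
  rw [hcong, integral_eq_lintegral_of_nonneg_ae hnn hgm]
  have hlin : ∀ᵐ ω ∂P, ENNReal.ofReal (g ω)
      = ∫⁻ t in Ioi 0, ENNReal.ofReal (S.indicator (fun q : Ω × ℝ ↦ f q.2) (ω, t)) := by
    filter_upwards [hpos] with ω hω
    rw [hgdef]
    simp_rw [hind_eq]
    rw [ofReal_integral_eq_lintegral_ofReal]
    · have hi : IntegrableOn f (Ioc (E1 ω) (E1 ω + E2 ω)) := hxi_intble ξ hω.1 hω.2.le
      have := (hi.integrable_indicator measurableSet_Ioc).restrict (s := Ioi 0)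
      apply this.congr
      exact ae_of_all _ fun t ↦ (hind_eq ω t)
    · refine (ae_restrict_iff' measurableSet_Ioi).2 (ae_of_all _ fun t ht ↦ ?_)
      have h0 := indicator_apply_nonneg (s := Ioc (E1 ω) (E1 ω + E2 ω)) (f := f) (a := t)
        (fun _ ↦ Real.rpow_nonneg (le_of_lt ht) _)
      rw [hind_eq] at h0
      exact h0
  rw [lintegral_congr_ae hlin]
  rw [lintegral_lintegral_swap (hFm.ennreal_ofReal.aemeasurable)]
  have hinner : ∀ t ∈ Ioi (0:ℝ),
      (∫⁻ ω, ENNReal.ofReal (S.indicator (fun q : Ω × ℝ ↦ f q.2) (ω, t)) ∂P)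
      = ENNReal.ofReal (Real.exp (-t) * t ^ ((1 - ξ) - 1)) := by
    intro t ht
    rw [mem_Ioi] at ht
    have hAt : MeasurableSet {ω | E1 ω < t ∧ t ≤ E1 ω + E2 ω} :=
      (measurableSet_lt hm1 measurable_const).inter
        (measurableSet_le measurable_const (hm1.add hm2))
    have hptw : ∀ ω, ENNReal.ofReal (S.indicator (fun q : Ω × ℝ ↦ f q.2) (ω, t))
        = ({ω | E1 ω < t ∧ t ≤ E1 ω + E2 ω}).indicator
            (fun _ ↦ ENNReal.ofReal (f t)) ω := by
      intro ω
      simp only [indicator_apply, hSdef, mem_setOf_eq]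
      split_ifs <;> simp
    simp_rw [hptw]
    rw [lintegral_indicator hAt, setLIntegral_const,
      prob_between P E1 E2 hm1 hm2 hindep h1 h2 ht,
      ← ENNReal.ofReal_mul (Real.rpow_nonneg ht.le _)]
    congr 1
    have h2' : t ^ (-ξ - 1) * t = t ^ (-ξ) := by
      rw [← Real.rpow_add_one ht.ne' (-ξ - 1)]
      norm_num
    rw [show (1 : ℝ) - ξ - 1 = -ξ by ring, ← h2']
    ring
  rw [setLIntegral_congr_fun measurableSet_Ioi hinner]
  rw [← ofReal_integral_eq_lintegral_ofReal (Real.GammaIntegral_convergent h1ξ)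
      ((ae_restrict_iff' measurableSet_Ioi).2 (ae_of_all _ fun x hx ↦ by
        have hx' : (0:ℝ) < x := hx
        positivity))]
  rw [← Real.Gamma_eq_integral h1ξ, ENNReal.toReal_ofReal (Real.Gamma_pos_of_pos h1ξ).le]
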